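/- Let n, N be nonnegative integers and let a, c, d, z be complex numbers such that (1−a)_n ≠ 0, and (a−n)_j ≠ 0 and (d)_j ≠ 0 for all 0 ≤ j ≤ N. Then Σ_{j=0}^{N} [(a)_j (−N)_j (c)_j/(j! (a−n)_j (d)_j)] z^j = (1/(1−a)_n) · Σ_{k=0}^{n} (−1)^k · C(n,k) · (1−a)_{n−k} · [(−N)_k (c)_k/(d)_k] · z^k · Σ_{m=0}^{N−k} [(−N+k)_m (c+k)_m/(m! (d+k)_m)] z^m. -/

import Mathlib

/-- The Pochhammer symbol `(a)_k = a(a+1)···(a+k−1)` for a complex number `a`. -/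
noncomputable def pochC (a : ℂ) (k : ℕ) : ℂ := ∏ i ∈ Finset.range k, (a + i)


lemma pochC_succ (x : ℂ) (k : ℕ) : pochC x (k+1) = pochC x k * (x + k) :=
  Finset.prod_range_succ _ _

lemma pochC_zero (x : ℂ) : pochC x 0 = 1 := rfl

lemma pochC_add (x : ℂ) (k m : ℕ) : pochC x (k + m) = pochC x k * pochC (x + k) m := by
  unfold pochC
  rw [Finset.prod_range_add]
  congr 1
  refine Finset.prod_congr rfl fun i _ => ?_
  push_cast; ring

lemma pochC_neg_nat_eq_zero (j k : ℕ) (h : j < k) : pochC (-(j:ℂ)) k = 0 := by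
  unfold pochC
  apply Finset.prod_eq_zero (Finset.mem_range.2 h)
  simp

lemma pochC_neg_fac (j : ℕ) : ∀ k, k ≤ j →
    pochC (-(j:ℂ)) k * ((j-k).factorial : ℂ) = (-1:ℂ)^k * (j.factorial : ℂ) := by
  intro k
  induction k with
  | zero => simp [pochC_zero]
  | succ k ih =>
    intro h
    have hk : k ≤ j := Nat.le_of_succ_le h
    have hsub : j - k = (j - (k+1)) + 1 := by omega
    rw [pochC_succ]
    have hcast : -(j:ℂ) + k = -(((j - k : ℕ) : ℂ)) := by
      push_cast [Nat.cast_sub hk]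
      ring
    rw [hcast]
    have hfac : ((j - k).factorial : ℂ) = ((j - k : ℕ) : ℂ) * ((j - (k+1)).factorial : ℂ) := by
      rw [hsub, Nat.factorial_succ]
      push_cast
      ring
    calc pochC (-(j:ℂ)) k * -((j - k : ℕ):ℂ) * ((j-(k+1)).factorial : ℂ)
        = -(pochC (-(j:ℂ)) k * (((j - k : ℕ):ℂ) * ((j-(k+1)).factorial : ℂ))) := by ring
      _ = -(pochC (-(j:ℂ)) k * ((j - k).factorial : ℂ)) := by rw [← hfac]
      _ = (-1:ℂ)^(k+1) * (j.factorial : ℂ) := by rw [ih hk]; ring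

lemma pochC_reflect (x : ℂ) (n : ℕ) : pochC x n = (-1:ℂ)^n * pochC (1 - x - n) n := by
  unfold pochC
  rw [← Finset.prod_range_reflect (fun i => x + i) n]
  rw [show ((-1:ℂ)^n = ∏ _i ∈ Finset.range n, (-1:ℂ)) by simp]
  rw [← Finset.prod_mul_distrib]
  refine Finset.prod_congr rfl fun i hi => ?_
  have hi' : i < n := Finset.mem_range.1 hi
  have e : ((n - 1 - i : ℕ) : ℂ) = (n:ℂ) - 1 - i := by
    have h9 : n - 1 - i = n - (1 + i) := by omega
    rw [h9, Nat.cast_sub (by omega : 1 + i ≤ n)]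
    push_cast; ring
  rw [e]; ring

lemma pochC_vandermonde (x y : ℂ) (n : ℕ) :
    ∑ k ∈ Finset.range (n+1), (n.choose k : ℂ) * pochC x k * pochC y (n-k)
      = pochC (x+y) n := by
  induction n with
  | zero => simp [pochC]
  | succ n ih =>
    have peel0 :
        ∑ k ∈ Finset.range (n+2), ((n+1).choose k : ℂ) * pochC x k * pochC y (n+1-k)
          = pochC y (n+1) +
            ∑ k ∈ Finset.range (n+1), ((n+1).choose (k+1) : ℂ) * pochC x (k+1) * pochC y (n-k) := by
      rw [Finset.sum_range_succ']
      simp [pochC]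
      ring
    rw [peel0]
    have hterm : ∀ k ∈ Finset.range (n+1),
        ((n+1).choose (k+1) : ℂ) * pochC x (k+1) * pochC y (n-k)
          = (n.choose k : ℂ) * pochC x (k+1) * pochC y (n-k)
            + (n.choose (k+1) : ℂ) * pochC x (k+1) * pochC y (n-k) := by
      intro k _
      rw [Nat.choose_succ_succ]
      push_cast; ring
    rw [Finset.sum_congr rfl hterm, Finset.sum_add_distrib]
    have shift : ∑ k ∈ Finset.range (n+1), (n.choose (k+1) : ℂ) * pochC x (k+1) * pochC y (n-k)
        = (∑ k ∈ Finset.range (n+1), (n.choose k : ℂ) * pochC x k * pochC y (n+1-k)) - pochC y (n+1) := by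
      have h5 : ∑ k ∈ Finset.range (n+2), (n.choose k : ℂ) * pochC x k * pochC y (n+1-k)
          = pochC y (n+1) + ∑ k ∈ Finset.range (n+1), (n.choose (k+1) : ℂ) * pochC x (k+1) * pochC y (n-k) := by
        rw [Finset.sum_range_succ']
        simp [pochC]
        ring
      have top : ∑ k ∈ Finset.range (n+2), (n.choose k : ℂ) * pochC x k * pochC y (n+1-k)
          = ∑ k ∈ Finset.range (n+1), (n.choose k : ℂ) * pochC x k * pochC y (n+1-k) := by
        rw [Finset.sum_range_succ]
        simp
      rw [top] at h5
      linear_combination -h5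
    rw [shift]
    have key : ∑ k ∈ Finset.range (n+1), ((n.choose k : ℂ) * pochC x (k+1) * pochC y (n-k))
        + ∑ k ∈ Finset.range (n+1), ((n.choose k : ℂ) * pochC x k * pochC y (n+1-k))
        = (∑ k ∈ Finset.range (n+1), (n.choose k : ℂ) * pochC x k * pochC y (n-k)) * (x + y + (n:ℂ)) := by
      rw [← Finset.sum_add_distrib, Finset.sum_mul]
      refine Finset.sum_congr rfl fun k hk => ?_
      have hk' : k ≤ n := Nat.lt_succ_iff.mp (Finset.mem_range.1 hk)
      have h4 : n + 1 - k = (n - k) + 1 := by omega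
      rw [h4, pochC_succ, pochC_succ, Nat.cast_sub hk']
      ring
    rw [show pochC (x+y) (n+1) = pochC (x+y) n * (x+y+(n:ℂ)) from pochC_succ _ _, ← ih]
    linear_combination key

lemma pochC_shift (a : ℂ) (n j : ℕ) :
    pochC a j * pochC (1 - a) n = pochC (a - n) j * pochC (1 - a - j) n := by
  have r1 : pochC (1-a) n = (-1:ℂ)^n * pochC (a - n) n := by
    rw [pochC_reflect (1-a) n, show (1 - (1-a) - (n:ℂ)) = a - n by ring]
  have r2 : pochC (1 - a - (j:ℂ)) n = (-1:ℂ)^n * pochC ((a - n) + j) n := by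
    rw [pochC_reflect (1-a-(j:ℂ)) n, show (1 - (1-a-(j:ℂ)) - (n:ℂ)) = (a - n) + j by ring]
  have e1 : pochC (a - (n:ℂ)) (n+j) = pochC (a - n) n * pochC a j := by
    rw [pochC_add, show (a - (n:ℂ) + (n:ℂ)) = a by ring]
  have e2 : pochC (a - (n:ℂ)) (j+n) = pochC (a - n) j * pochC ((a - n) + j) n :=
    pochC_add _ _ _
  have e3 : pochC (a-(n:ℂ)) n * pochC a j = pochC (a-(n:ℂ)) j * pochC ((a-(n:ℂ))+j) n := by
    rw [← e1, ← e2, Nat.add_comm]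
  rw [r1, r2]
  linear_combination ((-1:ℂ)^n) * e3

noncomputable def Faux (n N : ℕ) (a c d z : ℂ) (k j : ℕ) : ℂ :=
  (n.choose k : ℂ) * pochC (1-a) (n-k) * pochC (-(j:ℂ)) k *
    (pochC (-(N:ℂ)) j * pochC c j * (pochC d j)⁻¹ * z^j * ((j.factorial : ℂ))⁻¹)

/-- Formula (4.1) in its terminating form: for nonnegative integers `n, N` and complex
`a, c, d, z` with `(1−a)_n ≠ 0`, `(a−n)_j ≠ 0` and `(d)_j ≠ 0` for `0 ≤ j ≤ N`,
`Σ_{j=0}^{N} [(a)_j(−N)_j(c)_j/(j!(a−n)_j(d)_j)] z^j = (1/(1−a)_n) Σ_{k=0}^{n} (−1)^k`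
`C(n,k)(1−a)_{n−k} [(−N)_k(c)_k/(d)_k] z^k Σ_{m=0}^{N−k} [(−N+k)_m(c+k)_m/(m!(d+k)_m)] z^m`. -/
theorem F32_to_F21_reduction (n N : ℕ) (a c d z : ℂ)
    (h1 : pochC (1 - a) n ≠ 0)
    (h2 : ∀ j : ℕ, j ≤ N → pochC (a - (n:ℂ)) j ≠ 0)
    (h3 : ∀ j : ℕ, j ≤ N → pochC d j ≠ 0) :
    ∑ j ∈ Finset.range (N+1),
      (pochC a j * pochC (-(N:ℂ)) j * pochC c j) /
        ((j.factorial : ℂ) * pochC (a - (n:ℂ)) j * pochC d j) * z^j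
    = (1 / pochC (1 - a) n) *
        ∑ k ∈ Finset.range (n+1),
          (-1:ℂ)^k * (n.choose k : ℂ) * pochC (1 - a) (n - k) *
            (pochC (-(N:ℂ)) k * pochC c k / pochC d k) * z^k *
            ∑ m ∈ Finset.range (N - k + 1),
              (pochC (-(N:ℂ) + k) m * pochC (c + k) m) /
                ((m.factorial : ℂ) * pochC (d + k) m) * z^m := by
  rw [one_div, inv_mul_eq_div, eq_div_iff h1]
  have hF0 : ∀ k j : ℕ, N < j → Faux n N a c d z k j = 0 := by
    intro k j hj
    unfold Faux
    rw [pochC_neg_nat_eq_zero N j hj]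
    ring
  have hFlt : ∀ k j : ℕ, j < k → Faux n N a c d z k j = 0 := by
    intro k j hjk
    unfold Faux
    rw [pochC_neg_nat_eq_zero j k hjk]
    ring
  have step2 : (∑ j ∈ Finset.range (N+1),
      (pochC a j * pochC (-(N:ℂ)) j * pochC c j) /
        ((j.factorial : ℂ) * pochC (a - (n:ℂ)) j * pochC d j) * z^j) * pochC (1-a) n
      = ∑ j ∈ Finset.range (N+1), ∑ k ∈ Finset.range (n+1), Faux n N a c d z k j := by
    rw [Finset.sum_mul]
    refine Finset.sum_congr rfl fun j hj => ?_
    have hjN : j ≤ N := Nat.lt_succ_iff.mp (Finset.mem_range.1 hj)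
    have hsum : ∑ k ∈ Finset.range (n+1), Faux n N a c d z k j
        = pochC (1 - a - (j:ℂ)) n *
          (pochC (-(N:ℂ)) j * pochC c j * (pochC d j)⁻¹ * z^j * ((j.factorial : ℂ))⁻¹) := by
      calc ∑ k ∈ Finset.range (n+1), Faux n N a c d z k j
          = (∑ k ∈ Finset.range (n+1), (n.choose k : ℂ) * pochC (-(j:ℂ)) k * pochC (1-a) (n-k)) *
            (pochC (-(N:ℂ)) j * pochC c j * (pochC d j)⁻¹ * z^j * ((j.factorial : ℂ))⁻¹) := by
            rw [Finset.sum_mul]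
            refine Finset.sum_congr rfl fun k _ => ?_
            unfold Faux; ring
        _ = pochC (-(j:ℂ) + (1-a)) n *
            (pochC (-(N:ℂ)) j * pochC c j * (pochC d j)⁻¹ * z^j * ((j.factorial : ℂ))⁻¹) := by
            rw [pochC_vandermonde]
        _ = pochC (1 - a - (j:ℂ)) n *
            (pochC (-(N:ℂ)) j * pochC c j * (pochC d j)⁻¹ * z^j * ((j.factorial : ℂ))⁻¹) := by
            rw [show (-(j:ℂ) + (1-a)) = 1 - a - (j:ℂ) by ring]
    rw [hsum]
    have key := pochC_shift a n j
    have hd := h3 j hjN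
    have han := h2 j hjN
    have hfj : ((j.factorial : ℂ)) ≠ 0 := by
      exact_mod_cast Nat.cast_ne_zero.mpr (Nat.factorial_ne_zero j)
    field_simp
    linear_combination (pochC (-(N:ℂ)) j * pochC c j * z^j) * key
  have step1 : (∑ k ∈ Finset.range (n+1),
          (-1:ℂ)^k * (n.choose k : ℂ) * pochC (1 - a) (n - k) *
            (pochC (-(N:ℂ)) k * pochC c k / pochC d k) * z^k *
            ∑ m ∈ Finset.range (N - k + 1),
              (pochC (-(N:ℂ) + k) m * pochC (c + k) m) /
                ((m.factorial : ℂ) * pochC (d + k) m) * z^m)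
      = ∑ k ∈ Finset.range (n+1), ∑ j ∈ Finset.range (N+1), Faux n N a c d z k j := by
    refine Finset.sum_congr rfl fun k hk => ?_
    by_cases hkN : k ≤ N
    case neg =>
      have hNk : N < k := Nat.lt_of_not_le hkN
      rw [pochC_neg_nat_eq_zero N k hNk]
      rw [Finset.sum_eq_zero (fun j hj => hFlt k j (by
        have := Nat.lt_succ_iff.mp (Finset.mem_range.1 hj); omega))]
      ring
    case pos =>
      have hmain : ∀ m ∈ Finset.range (N - k + 1),
          (-1:ℂ)^k * (n.choose k : ℂ) * pochC (1 - a) (n - k) *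
            (pochC (-(N:ℂ)) k * pochC c k / pochC d k) * z^k *
            ((pochC (-(N:ℂ) + k) m * pochC (c + k) m) /
              ((m.factorial : ℂ) * pochC (d + k) m) * z^m)
          = Faux n N a c d z k (k+m) := by
        intro m hm
        have hmN : m ≤ N - k := Nat.lt_succ_iff.mp (Finset.mem_range.1 hm)
        have hkmN : k + m ≤ N := by omega
        have hdkm : pochC d (k+m) = pochC d k * pochC (d + k) m := pochC_add _ _ _
        have hNkm : pochC (-(N:ℂ)) (k+m) = pochC (-(N:ℂ)) k * pochC (-(N:ℂ) + k) m := pochC_add _ _ _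
        have hckm : pochC c (k+m) = pochC c k * pochC (c + k) m := pochC_add _ _ _
        have hdk : pochC d k ≠ 0 := h3 k hkN
        have hdkm_ne : pochC d (k+m) ≠ 0 := h3 (k+m) hkmN
        have hdk2 : pochC (d + k) m ≠ 0 := by
          intro h0
          apply hdkm_ne
          rw [hdkm, h0, mul_zero]
        have hfac : pochC (-(((k+m):ℕ):ℂ)) k * ((m).factorial : ℂ)
            = (-1:ℂ)^k * (((k+m).factorial : ℕ) : ℂ) := by
          have := pochC_neg_fac (k+m) k (Nat.le_add_right k m)
          rwa [Nat.add_sub_cancel_left] at this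
        have hfm : ((m.factorial : ℕ) : ℂ) ≠ 0 :=
          Nat.cast_ne_zero.mpr (Nat.factorial_ne_zero m)
        have hfkm : (((k+m).factorial : ℕ) : ℂ) ≠ 0 :=
          Nat.cast_ne_zero.mpr (Nat.factorial_ne_zero (k+m))
        have hfac' : pochC (-(m:ℂ) - k) k * ((m).factorial : ℂ)
            = (-1:ℂ)^k * (((k+m).factorial : ℕ) : ℂ) := by
          rw [show (-(m:ℂ) - (k:ℂ)) = -(((k+m : ℕ)):ℂ) by push_cast; ring]
          exact hfac
        unfold Faux
        rw [hdkm, hNkm, hckm, pow_add]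
        field_simp
        linear_combination -((n.choose k : ℂ) * pochC (1-a) (n-k) * pochC (-(N:ℂ)) k *
          pochC (-(N:ℂ)+k) m * pochC c k * pochC (c+k) m * z^k * z^m) * hfac
      rw [Finset.mul_sum, Finset.sum_congr rfl hmain]
      have hext : ∑ m ∈ Finset.range (N - k + 1), Faux n N a c d z k (k+m)
          = ∑ m ∈ Finset.range (N + 1), Faux n N a c d z k (k+m) := by
        apply Finset.sum_subset
        · exact Finset.range_subset_range.mpr (by omega)
        · intro m _ hm
          have : N - k < m := by
            simpa using Nat.lt_of_not_le (fun hle => hm (Finset.mem_range.2 (Nat.lt_succ_of_le hle)))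
          exact hF0 k (k+m) (by omega)
      rw [hext]
      have hA : ∑ j ∈ Finset.range (k + (N+1)), Faux n N a c d z k j
          = ∑ j ∈ Finset.range k, Faux n N a c d z k j
            + ∑ m ∈ Finset.range (N+1), Faux n N a c d z k (k+m) :=
        Finset.sum_range_add _ _ _
      have hB : ∑ j ∈ Finset.range ((N+1) + k), Faux n N a c d z k j
          = ∑ j ∈ Finset.range (N+1), Faux n N a c d z k j
            + ∑ i ∈ Finset.range k, Faux n N a c d z k ((N+1)+i) :=
        Finset.sum_range_add _ _ _
      have hz1 : ∑ j ∈ Finset.range k, Faux n N a c d z k j = 0 :=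
        Finset.sum_eq_zero fun j hj => hFlt k j (Finset.mem_range.1 hj)
      have hz2 : ∑ i ∈ Finset.range k, Faux n N a c d z k ((N+1)+i) = 0 :=
        Finset.sum_eq_zero fun i _ => hF0 k ((N+1)+i) (by omega)
      have hAB : ∑ j ∈ Finset.range (k + (N+1)), Faux n N a c d z k j
          = ∑ j ∈ Finset.range ((N+1) + k), Faux n N a c d z k j := by
        rw [Nat.add_comm]
      rw [hz1, zero_add] at hA
      rw [hz2, add_zero] at hB
      rw [← hA, hAB, hB]
  rw [step2, step1, Finset.sum_comm]
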